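/- For every infinite-dimensional Banach space X there exists an equivalent norm ‖·‖' on X such that K_a(X, ‖·‖') = 2. In fact, if {(x_i, x*_i)} is an Auerbach system in X and V = conv(B_X ∪ {±2x_i : i ∈ ℕ}), then the Minkowski functional of V is an equivalent norm in which {±2x_i : i ∈ ℕ} is a normalized 2-equilateral set. -/

import Mathlib

open Set Filter
open Pointwise

noncomputable section

/-- `S` is a `(c₁, c₂, d)`-bounded and separated antipodal subset of `X`. -/
def IsBSA (X : Type*) [NormedAddCommGroup X] [NormedSpace ℝ X] (S : Set X)
    (c₁ c₂ d : ℝ) : Prop :=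
  (∀ x ∈ S, ‖x‖ ≤ c₁) ∧
  ∀ x ∈ S, ∀ y ∈ S, x ≠ y → ∃ f : X →L[ℝ] ℝ, ‖f‖ ≤ c₂ ∧ d ≤ f y - f x ∧
    ∀ z ∈ S, f x ≤ f z ∧ f z ≤ f y

/-- The antipodal Kottman constant `K_a(X)`. -/
def Ka (X : Type*) [NormedAddCommGroup X] [NormedSpace ℝ X] : ℝ :=
  sSup {d : ℝ | ∃ S : Set X, S.Infinite ∧ IsBSA X S 1 1 d}

/-- The Kottman (separation) constant `K(X)`. -/
def Kc (X : Type*) [NormedAddCommGroup X] : ℝ :=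
  sSup {d : ℝ | ∃ S : Set X, S ⊆ Metric.closedBall 0 1 ∧ S.Infinite ∧
    ∀ x ∈ S, ∀ y ∈ S, x ≠ y → d ≤ ‖x - y‖}

/-- `S` is a `(1,1,d)`-b.s.a. set with respect to the norm function `N` on `X`:
the dual-ball condition `‖f‖ ≤ 1` is expressed as `f z ≤ N z` for all `z`. -/
def IsBSAWith {X : Type*} [AddCommGroup X] [Module ℝ X] (N : X → ℝ)
    (S : Set X) (d : ℝ) : Prop :=
  (∀ x ∈ S, N x ≤ 1) ∧
  ∀ x ∈ S, ∀ y ∈ S, x ≠ y → ∃ f : X →ₗ[ℝ] ℝ, (∀ z, f z ≤ N z) ∧ d ≤ f y - f x ∧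
    ∀ z ∈ S, f x ≤ f z ∧ f z ≤ f y

/-- The antipodal Kottman constant with respect to the norm function . -/
def KaWith {X : Type*} [AddCommGroup X] [Module ℝ X] (N : X → ℝ) : ℝ :=
  sSup {d : ℝ | ∃ S : Set X, S.Infinite ∧ IsBSAWith N S d}

section Helpers
variable {X : Type*} [NormedAddCommGroup X] [NormedSpace ℝ X]

/-- In an infinite-dimensional space, finitely many functionals have a common unit kernel
vector. -/
theorem aux_kernel (hinf : ¬FiniteDimensional ℝ X) {ι : Type*} [Finite ι]
    (f : ι → X →L[ℝ] ℝ) : ∃ z : X, ‖z‖ = 1 ∧ ∀ i, f i z = 0 := by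
  cases nonempty_fintype ι
  have h : ∃ z : X, z ≠ 0 ∧ ∀ i, f i z = 0 := by
    by_contra h
    push_neg at h
    apply hinf
    have hL : Function.Injective (LinearMap.pi (fun i => (f i : X →ₗ[ℝ] ℝ))) := by
      rw [← LinearMap.ker_eq_bot, LinearMap.ker_eq_bot']
      intro z hz
      by_contra hz0
      obtain ⟨i, hi⟩ := h z hz0
      exact hi (congrFun hz i)
    exact FiniteDimensional.of_injective _ hL
  obtain ⟨z, hz0, hz⟩ := h
  refine ⟨‖z‖⁻¹ • z, norm_smul_inv_norm hz0, fun i => ?_⟩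
  rw [map_smul, hz i, smul_eq_mul, mul_zero]

/-- A finite family of functionals in the unit dual ball which 7/8-norms a
finite-dimensional subspace. -/
theorem aux_norming (E : Submodule ℝ X) [FiniteDimensional ℝ E] :
    ∃ Ψ : Finset (X →L[ℝ] ℝ), (∀ ψ ∈ Ψ, ‖ψ‖ ≤ 1) ∧
      ∀ e ∈ E, ∃ ψ ∈ Ψ, (7/8 : ℝ) * ‖e‖ ≤ ψ e := by
  classical
  have : ProperSpace E := FiniteDimensional.proper ℝ E
  have hK : IsCompact (Metric.sphere (0:E) 1) := isCompact_sphere _ _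
  obtain ⟨t, ht, hcover⟩ := hK.elim_nhds_subcover (fun c => Metric.ball c (8⁻¹))
    (fun c _ => Metric.ball_mem_nhds c (by norm_num))
  have hgex : ∀ c : E, (c:X) ≠ 0 → ∃ ψ : X →L[ℝ] ℝ, ‖ψ‖ = 1 ∧ ψ c = ‖(c:X)‖ :=
    fun c hc => exists_dual_vector ℝ (c : X) (norm_ne_zero_iff.2 hc)
  set gfun : E → (X →L[ℝ] ℝ) := fun c =>
    if hc : (c:X) ≠ 0 then Classical.choose (hgex c hc) else 0 with hgfun
  have hgnorm : ∀ c : E, ‖gfun c‖ ≤ 1 := by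
    intro c
    show ‖(if hc : (c:X) ≠ 0 then Classical.choose (hgex c hc) else 0)‖ ≤ 1
    by_cases hc : (c:X) ≠ 0
    · rw [dif_pos hc]; exact le_of_eq (Classical.choose_spec (hgex c hc)).1
    · rw [dif_neg hc]; simp
  refine ⟨insert 0 (t.image gfun), ?_, ?_⟩
  · intro ψ hψ
    rcases Finset.mem_insert.1 hψ with rfl | hψ
    · simp
    · obtain ⟨c, _, rfl⟩ := Finset.mem_image.1 hψ
      exact hgnorm c
  · intro e he
    by_cases he0 : e = 0
    · exact ⟨0, Finset.mem_insert_self _ _, by simp [he0]⟩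
    · have hne : ‖e‖ ≠ 0 := norm_ne_zero_iff.2 he0
      set u : E := ⟨‖e‖⁻¹ • e, E.smul_mem _ he⟩ with hu
      have hu1 : ‖u‖ = 1 := by
        show ‖‖e‖⁻¹ • e‖ = 1
        rw [norm_smul, norm_inv, norm_norm, inv_mul_cancel₀ hne]
      have humem : u ∈ Metric.sphere (0:E) 1 := by
        rwa [mem_sphere_zero_iff_norm]
      obtain ⟨c, hct, hcball⟩ := mem_iUnion₂.1 (hcover humem)
      have hc1 : ‖c‖ = 1 := mem_sphere_zero_iff_norm.1 (ht c hct)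
      have hcne : (c:X) ≠ 0 := by
        intro h
        have : ‖c‖ = 0 := by simpa [norm_eq_zero] using congrArg norm h
        rw [hc1] at this; norm_num at this
      have hspec := Classical.choose_spec (hgex c hcne)
      set ψ := gfun c with hψdef
      have hψeq : ψ = Classical.choose (hgex c hcne) := by
        show (if hc : (c:X) ≠ 0 then Classical.choose (hgex c hc) else 0) = _
        rw [dif_pos hcne]
      have hψnorm : ‖ψ‖ = 1 := by rw [hψeq]; exact hspec.1
      have hψc : ψ c = 1 := by rw [hψeq, hspec.2]; exact hc1
      have hdist : ‖(u:X) - (c:X)‖ < 8⁻¹ := by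
        have := Metric.mem_ball.1 hcball
        rwa [Subtype.dist_eq, dist_eq_norm] at this
      have hψu : (7/8 : ℝ) ≤ ψ (u:X) := by
        have h1 : ψ (u:X) = ψ c + ψ ((u:X) - (c:X)) := by rw [map_sub]; ring
        have h2 : |ψ ((u:X) - (c:X))| ≤ ‖(u:X) - (c:X)‖ := by
          calc |ψ ((u:X) - (c:X))| = ‖ψ ((u:X) - (c:X))‖ := rfl
            _ ≤ ‖ψ‖ * ‖(u:X) - (c:X)‖ := ψ.le_opNorm _
            _ ≤ ‖(u:X) - (c:X)‖ := by rw [hψnorm, one_mul]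
        rw [h1, hψc]
        have := abs_le.1 h2
        linarith [hdist]
      refine ⟨ψ, Finset.mem_insert_of_mem (Finset.mem_image_of_mem _ hct), ?_⟩
      have heu : e = ‖e‖ • (u:X) := by
        show e = ‖e‖ • (‖e‖⁻¹ • e)
        rw [smul_smul, mul_inv_cancel₀ hne, one_smul]
      calc (7/8 : ℝ) * ‖e‖ ≤ ‖e‖ * ψ (u:X) := by
            have h0 : (0:ℝ) ≤ ‖e‖ := norm_nonneg e
            nlinarith
        _ = ψ e := by conv_rhs => rw [heu, map_smul, smul_eq_mul]


/-- Hahn-Banach distance functional: a norm-one functional vanishing on `E`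
and large at a point far from `E`. -/
theorem aux_distfun (E : Submodule ℝ X) {z : X} {d : ℝ} (hd0 : 0 < d)
    (hd : ∀ e ∈ E, d ≤ ‖z - e‖) :
    ∃ g : X →L[ℝ] ℝ, ‖g‖ ≤ 1 ∧ (∀ e ∈ E, g e = 0) ∧ d ≤ g z := by
  have hne : (E : Set X).Nonempty := ⟨0, E.zero_mem⟩
  set p : X → ℝ := fun v => Metric.infDist v (E : Set X) with hp
  have hz : z ≠ 0 := by
    intro h
    have := hd 0 E.zero_mem
    rw [h] at this; simp at this; linarith
  have hp_nonneg : ∀ v, 0 ≤ p v := fun v => Metric.infDist_nonneg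
  have hp_le : ∀ v, p v ≤ ‖v‖ := by
    intro v
    have := Metric.infDist_le_dist_of_mem (x := v) E.zero_mem
    simpa using this
  have hp_add : ∀ v w, p (v + w) ≤ p v + p w := by
    intro v w
    refine le_of_forall_pos_le_add ?_
    intro ε hε
    obtain ⟨e1, he1, h1⟩ := (Metric.infDist_lt_iff hne).1
      (lt_add_of_pos_right (p v) (half_pos hε))
    obtain ⟨e2, he2, h2⟩ := (Metric.infDist_lt_iff hne).1
      (lt_add_of_pos_right (p w) (half_pos hε))
    have hkey : p (v + w) ≤ dist (v + w) (e1 + e2) :=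
      Metric.infDist_le_dist_of_mem (E.add_mem he1 he2)
    have : dist (v + w) (e1 + e2) ≤ dist v e1 + dist w e2 := dist_add_add_le _ _ _ _
    linarith
  have hsets : ∀ c : ℝ, c ≠ 0 → c • (E : Set X) = (E : Set X) := by
    intro c hc
    ext w
    constructor
    · rintro ⟨u, hu, rfl⟩; exact E.smul_mem c hu
    · intro hw; exact ⟨c⁻¹ • w, E.smul_mem _ hw, smul_inv_smul₀ hc w⟩
  have hp_smul : ∀ c : ℝ, 0 < c → ∀ v, p (c • v) = c * p v := by
    intro c hc v
    calc p (c • v) = Metric.infDist (c • v) (c • (E:Set X)) := by rw [hsets c hc.ne']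
      _ = ‖c‖ * p v := infDist_smul₀ hc.ne' _ _
      _ = c * p v := by rw [Real.norm_eq_abs, abs_of_pos hc]
  set φ := LinearPMap.mkSpanSingleton (K := ℝ) (L := ℝ) (σ := RingHom.id ℝ) z (p z) hz with hφ
  have hdom : ∀ (v : φ.domain), φ v ≤ p v := by
    rintro ⟨v, hv⟩
    have hv' : v ∈ Submodule.span ℝ {z} := hv
    obtain ⟨c, rfl⟩ := Submodule.mem_span_singleton.1 hv'
    have happ : φ ⟨c • z, hv⟩ = c • (p z) := LinearPMap.mkSpanSingleton'_apply _ _ _ c _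
    rw [happ]
    rcases lt_trichotomy c 0 with hc | hc | hc
    · have h1 : c • p z ≤ 0 := by
        rw [smul_eq_mul]
        exact mul_nonpos_of_nonpos_of_nonneg hc.le (hp_nonneg z)
      exact h1.trans (hp_nonneg _)
    · simp only [hc, zero_smul]
      exact hp_nonneg 0
    · rw [hp_smul c hc, smul_eq_mul]
  obtain ⟨g, hg_ext, hg_le⟩ := exists_extension_of_le_sublinear φ p hp_smul hp_add hdom
  have hgz : g z = p z := by
    have := hg_ext ⟨z, Submodule.mem_span_singleton_self z⟩
    rw [this]
    exact LinearPMap.mkSpanSingleton_apply ℝ ℝ hz (p z)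
  have hbound : ∀ v, ‖g v‖ ≤ 1 * ‖v‖ := by
    intro v
    rw [one_mul, Real.norm_eq_abs, abs_le]
    constructor
    · have := hg_le (-v)
      rw [map_neg] at this
      have h2 := hp_le (-v)
      rw [norm_neg] at h2
      linarith
    · exact (hg_le v).trans (hp_le v)
  refine ⟨g.mkContinuous 1 hbound, ?_, ?_, ?_⟩
  · exact g.mkContinuous_norm_le zero_le_one hbound
  · intro e he
    have h1 : g e ≤ 0 := by
      have := hg_le e
      rwa [show p e = 0 from Metric.infDist_zero_of_mem he] at this
    have h2 : g (-e) ≤ 0 := by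
      have := hg_le (-e)
      rwa [show p (-e) = 0 from Metric.infDist_zero_of_mem (E.neg_mem he)] at this
    rw [map_neg] at h2
    show g e = 0
    linarith
  · show d ≤ g z
    rw [hgz]
    by_contra hlt
    push_neg at hlt
    obtain ⟨e, he, hde⟩ := (Metric.infDist_lt_iff hne).1 hlt
    rw [dist_eq_norm] at hde
    exact absurd (hd e he) (by linarith)


/-- The inductive step producing the next element of the Auerbach-type system. -/
theorem aux_step (hinf : ¬FiniteDimensional ℝ X) {n : ℕ}
    (x : Fin n → X) (f : Fin n → X →L[ℝ] ℝ) :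
    ∃ P : X × (X →L[ℝ] ℝ), ‖P.1‖ ≤ 5/2 ∧ ‖P.2‖ ≤ 1 ∧ P.2 P.1 = 1 ∧
      (∀ i, f i P.1 = 0) ∧ ∀ i, P.2 (x i) = 0 := by
  set E := Submodule.span ℝ (Set.range x) with hE
  have : FiniteDimensional ℝ E := FiniteDimensional.span_of_finite ℝ (Set.finite_range x)
  obtain ⟨Ψ, hΨ1, hΨ2⟩ := aux_norming E
  obtain ⟨z, hz1, hzk⟩ := aux_kernel hinf
    (fun i : Fin n ⊕ {ψ // ψ ∈ Ψ} => Sum.elim f (fun ψ => ψ.1) i)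
  have hfz : ∀ i, f i z = 0 := fun i => hzk (Sum.inl i)
  have hψz : ∀ ψ ∈ Ψ, ψ z = 0 := fun ψ hψ => hzk (Sum.inr ⟨ψ, hψ⟩)
  have hdist : ∀ e ∈ E, (2/5 : ℝ) ≤ ‖z - e‖ := by
    intro e he
    by_cases hsmall : ‖e‖ ≤ 3/5
    · have h1 : ‖z‖ - ‖e‖ ≤ ‖z - e‖ := norm_sub_norm_le _ _
      rw [hz1] at h1
      linarith
    · obtain ⟨ψ, hψ, hψe⟩ := hΨ2 e he
      have h1 : ψ (e - z) = ψ e := by rw [map_sub, hψz ψ hψ, sub_zero]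
      have h2 : ψ (e - z) ≤ ‖e - z‖ := by
        calc ψ (e - z) ≤ |ψ (e - z)| := le_abs_self _
          _ = ‖ψ (e - z)‖ := rfl
          _ ≤ ‖ψ‖ * ‖e - z‖ := ψ.le_opNorm _
          _ ≤ 1 * ‖e - z‖ := by
            have := norm_nonneg (e - z)
            nlinarith [hΨ1 ψ hψ]
          _ = ‖e - z‖ := one_mul _
      rw [norm_sub_rev]
      rw [h1] at h2
      nlinarith
  obtain ⟨g, hg1, hgE, hgz⟩ := aux_distfun E (by norm_num : (0:ℝ) < 2/5) hdist
  have hgz0 : (0:ℝ) < g z := lt_of_lt_of_le (by norm_num) hgz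
  refine ⟨((g z)⁻¹ • z, g), ?_, hg1, ?_, ?_, ?_⟩
  · show ‖(g z)⁻¹ • z‖ ≤ 5/2
    rw [norm_smul, hz1, mul_one, Real.norm_eq_abs, abs_of_pos (inv_pos.2 hgz0)]
    rw [show (5/2 : ℝ) = (2/5)⁻¹ by norm_num]
    exact inv_anti₀ (by norm_num) hgz
  · show g ((g z)⁻¹ • z) = 1
    rw [map_smul, smul_eq_mul, inv_mul_cancel₀ hgz0.ne']
  · intro i
    show f i ((g z)⁻¹ • z) = 0
    rw [map_smul, hfz i, smul_eq_mul, mul_zero]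
  · intro i
    exact hgE _ (Submodule.subset_span (Set.mem_range_self i))

/-- The biorthogonal sequence, built by recursion with choice. -/
private noncomputable def bs (hinf : ¬FiniteDimensional ℝ X) : ℕ → X × (X →L[ℝ] ℝ)
  | n => Classical.choose (aux_step hinf (fun i : Fin n => (bs hinf i).1)
      (fun i : Fin n => (bs hinf i).2))
  termination_by n => n
  decreasing_by all_goals exact i.isLt

private theorem bs_spec (hinf : ¬FiniteDimensional ℝ X) (n : ℕ) :
    ‖(bs hinf n).1‖ ≤ 5/2 ∧ ‖(bs hinf n).2‖ ≤ 1 ∧ (bs hinf n).2 (bs hinf n).1 = 1 ∧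
      (∀ i : Fin n, (bs hinf i).2 (bs hinf n).1 = 0) ∧
      ∀ i : Fin n, (bs hinf n).2 ((bs hinf i).1) = 0 := by
  have key : bs hinf n = Classical.choose (aux_step hinf (fun i : Fin n => (bs hinf i).1)
      (fun i : Fin n => (bs hinf i).2)) := by
    conv_lhs => rw [bs]
  rw [key]
  exact Classical.choose_spec (aux_step hinf (fun i : Fin n => (bs hinf i).1)
      (fun i : Fin n => (bs hinf i).2))

/-- Existence of a bounded biorthogonal system with unit-ball functionals. -/
theorem exists_biortho (hinf : ¬FiniteDimensional ℝ X) :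
    ∃ (x : ℕ → X) (f : ℕ → X →L[ℝ] ℝ), (∀ n, ‖x n‖ ≤ 5/2) ∧ (∀ n, ‖f n‖ ≤ 1) ∧
      ∀ i j, f i (x j) = if i = j then 1 else 0 := by
  refine ⟨fun n => (bs hinf n).1, fun n => (bs hinf n).2,
    fun n => (bs_spec hinf n).1, fun n => (bs_spec hinf n).2.1, ?_⟩
  intro i j
  rcases lt_trichotomy i j with h | h | h
  · rw [if_neg h.ne]
    exact (bs_spec hinf j).2.2.2.1 ⟨i, h⟩
  · subst h
    rw [if_pos rfl]
    exact (bs_spec hinf i).2.2.1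
  · rw [if_neg h.ne']
    exact (bs_spec hinf i).2.2.2.2 ⟨j, h⟩

end Helpers

section Gauge
variable {X : Type*} [NormedAddCommGroup X] [NormedSpace ℝ X]

theorem aux_le_gauge {V : Set X} (hBV : Metric.closedBall (0:X) 1 ⊆ V)
    (g : X →ₗ[ℝ] ℝ) (hg : ∀ v ∈ V, g v ≤ 1) (w : X) : g w ≤ gauge V w := by
  have hnonempty : {r : ℝ | 0 < r ∧ w ∈ r • V}.Nonempty := by
    by_cases hw : w = 0
    · refine ⟨1, one_pos, ?_⟩
      rw [hw]
      exact ⟨0, hBV (Metric.mem_closedBall_self zero_le_one), smul_zero 1⟩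
    · refine ⟨‖w‖, norm_pos_iff.2 hw, ⟨‖w‖⁻¹ • w, hBV ?_, ?_⟩⟩
      · rw [Metric.mem_closedBall, dist_zero_right]
        exact le_of_eq (norm_smul_inv_norm hw)
      · show ‖w‖ • ‖w‖⁻¹ • w = w
        rw [smul_smul, mul_inv_cancel₀ (norm_ne_zero_iff.2 hw), one_smul]
  refine le_csInf hnonempty ?_
  rintro r ⟨hr0, hr⟩
  obtain ⟨v, hv, rfl⟩ := hr
  rw [map_smul, smul_eq_mul]
  nlinarith [hg v hv]

theorem aux_gauge_lower {V : Set X} (hBV : Metric.closedBall (0:X) 1 ⊆ V)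
    (hV5 : V ⊆ Metric.closedBall (0:X) 5) (w : X) : ‖w‖/5 ≤ gauge V w := by
  have hnonempty : {r : ℝ | 0 < r ∧ w ∈ r • V}.Nonempty := by
    by_cases hw : w = 0
    · refine ⟨1, one_pos, ?_⟩
      rw [hw]
      exact ⟨0, hBV (Metric.mem_closedBall_self zero_le_one), smul_zero 1⟩
    · refine ⟨‖w‖, norm_pos_iff.2 hw, ⟨‖w‖⁻¹ • w, hBV ?_, ?_⟩⟩
      · rw [Metric.mem_closedBall, dist_zero_right]
        exact le_of_eq (norm_smul_inv_norm hw)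
      · show ‖w‖ • ‖w‖⁻¹ • w = w
        rw [smul_smul, mul_inv_cancel₀ (norm_ne_zero_iff.2 hw), one_smul]
  refine le_csInf hnonempty ?_
  rintro r ⟨hr0, hr⟩
  obtain ⟨v, hv, rfl⟩ := hr
  have h5 : ‖v‖ ≤ 5 := by
    have := hV5 hv
    rwa [Metric.mem_closedBall, dist_zero_right] at this
  rw [norm_smul, Real.norm_eq_abs, abs_of_pos hr0]
  nlinarith [norm_nonneg v]

end Gauge

theorem stmt17' {X : Type*} [NormedAddCommGroup X] [NormedSpace ℝ X]
    [CompleteSpace X] (hinf : ¬FiniteDimensional ℝ X)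
    (u : ℕ → X) (F : ℕ → X →L[ℝ] ℝ) (hu : ∀ n, ‖u n‖ ≤ 5/2) (hF : ∀ n, ‖F n‖ ≤ 1)
    (hbio : ∀ i j, F i (u j) = if i = j then 1 else 0) :
    ∃ N : X → ℝ,
      (∀ x, N x = 0 ↔ x = 0) ∧
      (∀ x y, N (x + y) ≤ N x + N y) ∧
      (∀ (a : ℝ) (x : X), N (a • x) = |a| * N x) ∧
      (∃ c C : ℝ, 0 < c ∧ ∀ x, c * ‖x‖ ≤ N x ∧ N x ≤ C * ‖x‖) ∧
      (∃ S : Set X, S.Infinite ∧ (∀ x ∈ S, N x = 1) ∧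
        ∀ x ∈ S, ∀ y ∈ S, x ≠ y → N (x - y) = 2) ∧
      KaWith N = 2 := by
  classical
  set A : Set X := Set.range (fun n => (2:ℝ) • u n) with hA
  set gen : Set X := Metric.closedBall (0:X) 1 ∪ (A ∪ -A) with hgen
  set V : Set X := convexHull ℝ gen with hV
  set N : X → ℝ := gauge V with hN
  -- basic membership facts
  have hBgen : Metric.closedBall (0:X) 1 ⊆ gen := subset_union_left
  have hBV : Metric.closedBall (0:X) 1 ⊆ V := hBgen.trans (subset_convexHull ℝ gen)
  have h0V : (0:X) ∈ V := hBV (Metric.mem_closedBall_self zero_le_one)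
  have hAV : A ⊆ V := (subset_union_left.trans subset_union_right).trans (subset_convexHull ℝ gen)
  have hnAV : -A ⊆ V :=
    (subset_union_right.trans subset_union_right).trans (subset_convexHull ℝ gen)
  have hconv : Convex ℝ V := convex_convexHull ℝ gen
  have habs : Absorbent ℝ V :=
    absorbent_nhds_zero (Filter.mem_of_superset
      (Metric.closedBall_mem_nhds 0 one_pos) hBV)
  -- V is bounded by the ball of radius 5
  have hV5 : V ⊆ Metric.closedBall (0:X) 5 := by
    rw [hV]
    refine convexHull_min ?_ (convex_closedBall _ _)
    rintro v (hv | hv | hv)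
    · exact Metric.closedBall_subset_closedBall (by norm_num) hv
    · obtain ⟨k, rfl⟩ := hv
      rw [Metric.mem_closedBall, dist_zero_right, norm_smul]
      have := hu k
      rw [Real.norm_eq_abs]
      norm_num
      linarith
    · rw [Set.mem_neg] at hv
      obtain ⟨k, hk⟩ := hv
      have hk' : (2:ℝ) • u k = -v := hk
      have hveq : v = -((2:ℝ) • u k) := by rw [hk', neg_neg]
      rw [hveq, Metric.mem_closedBall, dist_zero_right, norm_neg, norm_smul]
      have := hu k
      rw [Real.norm_eq_abs]
      norm_num
      linarith
  -- symmetry and balancedness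
  have hgen_symm : -gen = gen := by
    rw [hgen]
    have h1 : -(Metric.closedBall (0:X) 1) = Metric.closedBall (0:X) 1 := by
      ext v
      rw [Set.mem_neg, Metric.mem_closedBall, Metric.mem_closedBall,
        dist_zero_right, dist_zero_right, norm_neg]
    rw [Set.union_neg, Set.union_neg, h1, neg_neg]
    rw [Set.union_comm A (-A)]
  have hVsymm : ∀ v ∈ V, -v ∈ V := by
    intro v hv
    have : -V = V := by
      rw [hV, ← convexHull_neg, hgen_symm]
    rw [← this]
    exact Set.neg_mem_neg.2 hv
  have hbal : Balanced ℝ V := by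
    intro a ha
    rintro w hw
    obtain ⟨v, hv, rfl⟩ := hw
    rw [Real.norm_eq_abs] at ha
    show a • v ∈ V
    rcases le_or_gt 0 a with h0 | h0
    · exact hconv.smul_mem_of_zero_mem h0V hv ⟨h0, by rwa [abs_of_nonneg h0] at ha⟩
    · have heq : a • v = (-a) • (-v) := by rw [smul_neg, neg_smul, neg_neg]
      rw [heq]
      refine hconv.smul_mem_of_zero_mem h0V (hVsymm v hv) ⟨by linarith, ?_⟩
      rw [abs_of_neg h0] at ha
      linarith
  -- properties of N
  have hNsmul : ∀ (a : ℝ) (w : X), N (a • w) = |a| * N w := by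
    intro a w
    rw [hN, gauge_smul hbal, Real.norm_eq_abs]
  have hNadd : ∀ v w, N (v + w) ≤ N v + N w := fun v w => gauge_add_le hconv habs v w
  have hlower : ∀ w, ‖w‖/5 ≤ N w := fun w => aux_gauge_lower hBV hV5 w
  have hupper : ∀ w, N w ≤ ‖w‖ := by
    intro w
    have habsB : Absorbent ℝ (Metric.closedBall (0:X) 1) :=
      absorbent_nhds_zero (Metric.closedBall_mem_nhds 0 one_pos)
    have h1 := gauge_mono habsB hBV w
    have h2 : gauge (Metric.closedBall (0:X) 1) w = ‖w‖ := by
      rw [gauge_closedBall zero_le_one, div_one]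
    rw [hN, ← h2]
    exact h1
  have hNzero : ∀ w, N w = 0 ↔ w = 0 := by
    intro w
    constructor
    · intro h
      have := hlower w
      rw [h] at this
      have : ‖w‖ = 0 := le_antisymm (by linarith) (norm_nonneg w)
      exact norm_eq_zero.1 this
    · rintro rfl
      exact gauge_zero
  -- evaluation of functionals bounded on V
  have hFv : ∀ n v, ‖v‖ ≤ 1 → |F n v| ≤ 1 := by
    intro n v hv
    have h1 : ‖F n v‖ ≤ ‖F n‖ * ‖v‖ := (F n).le_opNorm v
    rw [Real.norm_eq_abs] at h1
    nlinarith [hF n, norm_nonneg (F n), norm_nonneg v, abs_nonneg (F n v)]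
  have hVle : ∀ (φ : X →L[ℝ] ℝ), (∀ v, ‖v‖ ≤ 1 → φ v ≤ 1) → (∀ k, φ ((2:ℝ) • u k) ≤ 1) →
      (∀ k, -(φ ((2:ℝ) • u k)) ≤ 1) → ∀ v ∈ V, φ v ≤ 1 := by
    intro φ h1 h2 h3
    have hconv' : Convex ℝ {v : X | φ v ≤ 1} :=
      convex_halfSpace_le ⟨φ.map_add, φ.map_smul⟩ 1
    rw [hV]
    refine convexHull_min ?_ hconv'
    rintro v (hv | hv | hv)
    · have hv1 : ‖v‖ ≤ 1 := by
        rwa [Metric.mem_closedBall, dist_zero_right] at hv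
      exact h1 v hv1
    · obtain ⟨k, rfl⟩ := hv
      exact h2 k
    · rw [Set.mem_neg] at hv
      obtain ⟨k, hk⟩ := hv
      have hk' : (2:ℝ) • u k = -v := hk
      have hveq : v = -((2:ℝ) • u k) := by rw [hk', neg_neg]
      show φ v ≤ 1
      rw [hveq, map_neg]
      exact h3 k
  -- the key functional bound: for φ with φ ≤ 1 on V, φ ≤ N
  have hkey : ∀ (φ : X →L[ℝ] ℝ), (∀ v ∈ V, φ v ≤ 1) → ∀ w, φ w ≤ N w := by
    intro φ hφ w
    have := aux_le_gauge hBV (φ : X →ₗ[ℝ] ℝ) (by simpa using hφ) w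
    simpa using this
  -- N (2 • u n) = 1
  have hmemA : ∀ n, (2:ℝ) • u n ∈ V := fun n => hAV ⟨n, rfl⟩
  have hN2u_le : ∀ n, N ((2:ℝ) • u n) ≤ 1 := fun n => gauge_le_one_of_mem (hmemA n)
  have happly : ∀ n k, (F n) ((2:ℝ) • u k) = if n = k then 2 else 0 := by
    intro n k
    rw [map_smul, smul_eq_mul, hbio]
    by_cases h : n = k <;> simp [h]
  have hN1 : ∀ n, N ((2:ℝ) • u n) = 1 := by
    intro n
    refine le_antisymm (hN2u_le n) ?_
    set φ : X →L[ℝ] ℝ := (2⁻¹ : ℝ) • F n with hφ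
    have hφapp : ∀ w, φ w = 2⁻¹ * F n w := fun w => rfl
    have hφle : ∀ v ∈ V, φ v ≤ 1 := by
      refine hVle φ ?_ ?_ ?_
      · intro v hv
        rw [hφapp]
        have h1 := abs_le.1 (hFv n v hv)
        linarith [h1.1, h1.2]
      · intro k
        rw [hφapp, happly]
        rcases eq_or_ne n k with rfl | h
        · rw [if_pos rfl]; norm_num
        · rw [if_neg h]; norm_num
      · intro k
        rw [hφapp, happly]
        rcases eq_or_ne n k with rfl | h
        · rw [if_pos rfl]; norm_num
        · rw [if_neg h]; norm_num
    have := hkey φ hφle ((2:ℝ) • u n)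
    rw [hφapp, happly, if_pos rfl] at this
    linarith
  -- pairwise distances
  have hpairφ : ∀ i j : ℕ, ∀ v ∈ V, ((2⁻¹ : ℝ) • (F i - F j)) v ≤ 1 := by
    intro i j
    have happ : ∀ w, ((2⁻¹ : ℝ) • (F i - F j)) w = 2⁻¹ * (F i w - F j w) := fun w => rfl
    refine hVle _ ?_ ?_ ?_
    · intro v hv
      rw [happ]
      have h1 := abs_le.1 (hFv i v hv)
      have h2 := abs_le.1 (hFv j v hv)
      linarith [h1.1, h1.2, h2.1, h2.2]
    · intro k
      rw [happ, happly, happly]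
      by_cases hik : i = k
      · by_cases hjk : j = k
        · rw [if_pos hik, if_pos hjk]; norm_num
        · rw [if_pos hik, if_neg hjk]; norm_num
      · by_cases hjk : j = k
        · rw [if_neg hik, if_pos hjk]; norm_num
        · rw [if_neg hik, if_neg hjk]; norm_num
    · intro k
      rw [happ, happly, happly]
      by_cases hik : i = k
      · by_cases hjk : j = k
        · rw [if_pos hik, if_pos hjk]; norm_num
        · rw [if_pos hik, if_neg hjk]; norm_num
      · by_cases hjk : j = k
        · rw [if_neg hik, if_pos hjk]; norm_num
        · rw [if_neg hik, if_neg hjk]; norm_num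
  have hFpair : ∀ i j : ℕ, ∀ w, ((2⁻¹ : ℝ) • (F i - F j)) w ≤ N w :=
    fun i j => hkey _ (hpairφ i j)
  have hpairval : ∀ i j k : ℕ, ((2⁻¹ : ℝ) • (F i - F j)) ((2:ℝ) • u k) =
      (if i = k then 1 else 0) - (if j = k then 1 else 0) := by
    intro i j k
    have happ : ∀ w, ((2⁻¹ : ℝ) • (F i - F j)) w = 2⁻¹ * (F i w - F j w) := fun w => rfl
    rw [happ, happly, happly]
    by_cases hik : i = k
    · by_cases hjk : j = k
      · rw [if_pos hik, if_pos hjk, if_pos hik, if_pos hjk]; norm_num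
      · rw [if_pos hik, if_neg hjk, if_pos hik, if_neg hjk]; norm_num
    · by_cases hjk : j = k
      · rw [if_neg hik, if_pos hjk, if_neg hik, if_pos hjk]; norm_num
      · rw [if_neg hik, if_neg hjk, if_neg hik, if_neg hjk]; norm_num
  -- the equilateral set
  have hNneg : ∀ w, N (-w) = N w := by
    intro w
    rw [show -w = (-1 : ℝ) • w by rw [neg_one_smul], hNsmul]
    norm_num
  have hdist2 : ∀ i j : ℕ, i ≠ j → N ((2:ℝ) • u i - (2:ℝ) • u j) = 2 := by
    intro i j hij
    refine le_antisymm ?_ ?_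
    · have h1 : N ((2:ℝ) • u i - (2:ℝ) • u j) ≤ N ((2:ℝ) • u i) + N (-((2:ℝ) • u j)) := by
        rw [sub_eq_add_neg]; exact hNadd _ _
      rw [hNneg, hN1 i, hN1 j] at h1
      linarith
    · have h := hFpair i j ((2:ℝ) • u i - (2:ℝ) • u j)
      rw [map_sub, hpairval, hpairval, if_pos rfl, if_pos rfl,
        if_neg hij, if_neg (Ne.symm hij)] at h
      linarith
  have hinj : Function.Injective (fun n => (2:ℝ) • u n) := by
    intro a b hab
    by_contra hne2
    have h := congrArg (F a) hab
    simp only [happly, if_pos rfl, if_neg hne2] at h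
    norm_num at h
  have hAinf : A.Infinite := Set.infinite_range_of_injective hinj
  -- IsBSAWith N A 2
  have hbsa2 : IsBSAWith N A 2 := by
    constructor
    · rintro w ⟨n, rfl⟩
      exact le_of_eq (hN1 n)
    · rintro w ⟨i, rfl⟩ y ⟨j, rfl⟩ hne
      have hij : i ≠ j := by
        rintro rfl
        exact hne rfl
      refine ⟨(((2⁻¹ : ℝ) • (F j - F i) : X →L[ℝ] ℝ) : X →ₗ[ℝ] ℝ), ?_, ?_, ?_⟩
      · intro w
        simpa using hFpair j i w
      · show (2:ℝ) ≤ ((2⁻¹ : ℝ) • (F j - F i)) ((2:ℝ) • u j) -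
          ((2⁻¹ : ℝ) • (F j - F i)) ((2:ℝ) • u i)
        rw [hpairval, hpairval, if_pos rfl, if_pos rfl, if_neg hij, if_neg (Ne.symm hij)]
        norm_num
      · rintro w ⟨k, rfl⟩
        show ((2⁻¹ : ℝ) • (F j - F i)) ((2:ℝ) • u i) ≤
            ((2⁻¹ : ℝ) • (F j - F i)) ((2:ℝ) • u k) ∧
          ((2⁻¹ : ℝ) • (F j - F i)) ((2:ℝ) • u k) ≤
            ((2⁻¹ : ℝ) • (F j - F i)) ((2:ℝ) • u j)
        rw [hpairval, hpairval, hpairval, if_pos rfl, if_pos rfl,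
          if_neg hij, if_neg (Ne.symm hij)]
        have hcase : -(1:ℝ) ≤ (if j = k then (1:ℝ) else 0) - (if i = k then 1 else 0) ∧
            (if j = k then (1:ℝ) else 0) - (if i = k then 1 else 0) ≤ 1 := by
          by_cases hjk : j = k
          · by_cases hik : i = k
            · rw [if_pos hjk, if_pos hik]; norm_num
            · rw [if_pos hjk, if_neg hik]; norm_num
          · by_cases hik : i = k
            · rw [if_neg hjk, if_pos hik]; norm_num
            · rw [if_neg hjk, if_neg hik]; norm_num
        constructor
        · linarith [hcase.1]
        · linarith [hcase.2]
  -- KaWith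
  have hub : ∀ d ∈ {d : ℝ | ∃ S : Set X, S.Infinite ∧ IsBSAWith N S d}, d ≤ 2 := by
    rintro d ⟨S, hSinf, hS1, hS2⟩
    obtain ⟨a, ha, b, hb, hab⟩ := hSinf.nontrivial
    obtain ⟨φ, hφ1, hφ2, _⟩ := hS2 a ha b hb hab
    have h1 : φ b ≤ 1 := (hφ1 b).trans (hS1 b hb)
    have h2 : -φ a ≤ 1 := by
      have h3 := hφ1 (-a)
      rw [map_neg, hNneg a] at h3
      exact h3.trans (hS1 a ha)
    linarith
  have hKa : KaWith N = 2 := by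
    rw [KaWith]
    refine le_antisymm (csSup_le ⟨2, A, hAinf, hbsa2⟩ hub) ?_
    exact le_csSup ⟨2, hub⟩ ⟨A, hAinf, hbsa2⟩
  -- assemble
  refine ⟨N, hNzero, hNadd, hNsmul, ⟨1/5, 1, by norm_num, fun w => ⟨?_, ?_⟩⟩, ?_, hKa⟩
  · have := hlower w
    linarith
  · have := hupper w
    linarith
  · refine ⟨A, hAinf, ?_, ?_⟩
    · rintro w ⟨n, rfl⟩
      exact hN1 n
    · rintro w ⟨i, rfl⟩ y ⟨j, rfl⟩ hne
      have hij : i ≠ j := by rintro rfl; exact hne rfl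
      exact hdist2 i j hij

/-- Every infinite-dimensional Banach space admits an equivalent norm N with
K_a(X, N) = 2; indeed a norm admitting an infinite normalized 2-equilateral
set. -/
theorem stmt17 {X : Type*} [NormedAddCommGroup X] [NormedSpace ℝ X]
    [CompleteSpace X] (hinf : ¬FiniteDimensional ℝ X) :
    ∃ N : X → ℝ,
      (∀ x, N x = 0 ↔ x = 0) ∧
      (∀ x y, N (x + y) ≤ N x + N y) ∧
      (∀ (a : ℝ) (x : X), N (a • x) = |a| * N x) ∧
      (∃ c C : ℝ, 0 < c ∧ ∀ x, c * ‖x‖ ≤ N x ∧ N x ≤ C * ‖x‖) ∧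
      (∃ S : Set X, S.Infinite ∧ (∀ x ∈ S, N x = 1) ∧
        ∀ x ∈ S, ∀ y ∈ S, x ≠ y → N (x - y) = 2) ∧
      KaWith N = 2 := by
  obtain ⟨u, F, hu, hF, hbio⟩ := exists_biortho hinf
  exact stmt17' hinf u F hu hF hbio
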